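/- Let N ≥ 3, b > 0, and let f ∈ C¹(ℝ₊^N) satisfy f(y) ≥ (λ/|y − x|)^b · f(x + λ²(y − x)/|y − x|²) for all y ∈ ℝ₊^N, all x ∈ ∂ℝ₊^N, and all λ > 0. Then f depends only on the last coordinate: f(y) = f(y_N e_N) for all y ∈ ℝ₊^N. -/

import Mathlib

open Real Filter
open scoped BigOperators RealInnerProductSpace

noncomputable section

/-- `N`-dimensional Euclidean space. -/
abbrev E (N : ℕ) := EuclideanSpace ℝ (Fin N)

/-- The last coordinate index of `Fin N`. -/
def lastIdx (N : ℕ) (h : 0 < N) : Fin N := ⟨N - 1, Nat.sub_lt h Nat.one_pos⟩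

/-- Partial derivative of `u` in the `i`-th coordinate direction. -/
def pd {N : ℕ} (u : E N → ℝ) (i : Fin N) (y : E N) : ℝ :=
  fderiv ℝ u y (EuclideanSpace.single i 1)

/-- The Laplacian of `u`. -/
def lap {N : ℕ} (u : E N → ℝ) (y : E N) : ℝ := ∑ i, pd (pd u i) i y

/-- if `f ∈ C¹(ℝ₊^N)` satisfies
`f(y) ≥ (λ/|y-x|)^b f(x + λ²(y-x)/|y-x|²)` for all `y ∈ ℝ₊^N`, `x ∈ ∂ℝ₊^N`, `λ > 0`,
then `f` depends only on the last coordinate. -/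
theorem stmt6 (N : ℕ) (hN : 3 ≤ N) (b : ℝ) (hb : 0 < b) (f : E N → ℝ)
    (hf : ContDiffOn ℝ 1 f {y : E N | 0 < y (lastIdx N (by omega))})
    (hinv : ∀ y : E N, 0 < y (lastIdx N (by omega)) →
      ∀ x : E N, x (lastIdx N (by omega)) = 0 → ∀ lam : ℝ, 0 < lam →
      (lam / ‖y - x‖) ^ b * f (x + (lam ^ 2 / ‖y - x‖ ^ 2) • (y - x)) ≤ f y) :
    ∀ y : E N, 0 < y (lastIdx N (by omega)) →
      f y = f ((y (lastIdx N (by omega))) •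
        (EuclideanSpace.single (lastIdx N (by omega)) (1 : ℝ) : E N)) := by
  have hNpos : 0 < N := by omega
  set l : Fin N := lastIdx N hNpos with hl
  have hopen : IsOpen {y : E N | 0 < y l} :=
    isOpen_lt continuous_const (EuclideanSpace.proj l).continuous
  have hdiff : ∀ z : E N, 0 < z l → DifferentiableAt ℝ f z := fun z hz =>
    (hf.differentiableOn one_ne_zero).differentiableAt (hopen.mem_nhds hz)
  -- first-order condition
  have key : ∀ z : E N, 0 < z l → ∀ x : E N, x l = 0 →
      b * f z + 2 * fderiv ℝ f z (z - x) = 0 := by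
    intro z hz x hx
    have hzx : z ≠ x := by
      intro h; rw [h, hx] at hz; exact lt_irrefl 0 hz
    set r : ℝ := ‖z - x‖ with hr
    have hrpos : 0 < r := by
      rw [hr]; exact norm_pos_iff.mpr (sub_ne_zero.mpr hzx)
    set F := fderiv ℝ f z with hF
    set g : ℝ → ℝ := fun lam => (lam / r) ^ b * f (x + (lam ^ 2 / r ^ 2) • (z - x)) with hg
    have hφr : x + (r ^ 2 / r ^ 2) • (z - x) = z := by
      rw [div_self (by positivity), one_smul]; abel
    have hgr : g r = f z := by
      simp only [hg]
      rw [div_self hrpos.ne', Real.one_rpow, hφr, one_mul]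
    have hmax : IsLocalMax g r := by
      filter_upwards [eventually_gt_nhds hrpos] with lam hlam
      rw [hgr]
      exact hinv z hz x hx lam hlam
    have h1 : HasDerivAt (fun lam : ℝ => (lam / r) ^ b) (b / r) r := by
      have : HasDerivAt (fun lam : ℝ => lam / r) (1 / r) r := by
        simpa using (hasDerivAt_id r).div_const r
      have h := this.rpow_const (p := b) (Or.inl (by simp [div_self hrpos.ne']))
      convert h using 1
      rw [div_self hrpos.ne', Real.one_rpow]; ring
    have hφ : HasDerivAt (fun lam : ℝ => x + (lam ^ 2 / r ^ 2) • (z - x))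
        ((2 * r / r ^ 2) • (z - x)) r := by
      have h : HasDerivAt (fun lam : ℝ => x + (lam ^ 2 / r ^ 2) • (z - x)) _ r := (((hasDerivAt_pow 2 r).div_const (r ^ 2)).smul_const (z - x)).const_add x
      convert h using 2
      norm_num
    have h2 : HasDerivAt (fun lam : ℝ => f (x + (lam ^ 2 / r ^ 2) • (z - x)))
        (F ((2 * r / r ^ 2) • (z - x))) r := by
      have hfd : HasFDerivAt f F (x + (r ^ 2 / r ^ 2) • (z - x)) := by
        rw [hφr]; exact (hdiff z hz).hasFDerivAt
      exact hfd.comp_hasDerivAt r hφ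
    have hg' : HasDerivAt g (b / r * f z + (2 * r / r ^ 2) * F (z - x)) r := by
      have h : HasDerivAt g _ r := h1.mul h2
      convert h using 1
      rw [hφr, div_self hrpos.ne', Real.one_rpow, one_mul, F.map_smul, smul_eq_mul]
    have h0 : b / r * f z + (2 * r / r ^ 2) * F (z - x) = 0 := by
      rw [← hg'.deriv]; exact hmax.deriv_eq_zero
    have hr2 : (2 * r / r ^ 2) = 2 / r := by
      field_simp
    rw [hr2] at h0
    have := mul_eq_zero_of_left h0 r
    field_simp at this
    rw [map_sub] at this ⊢
    linarith [this]
  -- horizontal derivatives vanish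
  have hderiv0 : ∀ z : E N, 0 < z l → ∀ v : E N, v l = 0 → fderiv ℝ f z v = 0 := by
    intro z hz v hv
    set x1 : E N := z - (z l) • EuclideanSpace.single l 1 with hx1
    have hx1l : x1 l = 0 := by
      simp [hx1, PiLp.sub_apply, PiLp.smul_apply, EuclideanSpace.single_apply]
    set x2 : E N := x1 - v with hx2
    have hx2l : x2 l = 0 := by
      simp [hx2, PiLp.sub_apply, hx1l, hv]
    have e1 := key z hz x1 hx1l
    have e2 := key z hz x2 hx2l
    have hsub : (z - x2) - (z - x1) = v := by
      rw [hx2]; abel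
    have : fderiv ℝ f z ((z - x2) - (z - x1)) = 0 := by
      rw [map_sub]; linarith
    rwa [hsub] at this
  intro y hy
  set v : E N := (y l) • EuclideanSpace.single l 1 - y with hv
  have hvl : v l = 0 := by
    simp [hv, PiLp.sub_apply, PiLp.smul_apply, EuclideanSpace.single_apply]
  have hcl : ∀ t : ℝ, (y + t • v) l = y l := by
    intro t
    simp [PiLp.add_apply, PiLp.smul_apply, hvl]
  set h : ℝ → ℝ := fun t => f (y + t • v) with hh
  have hd0 : ∀ t : ℝ, HasDerivAt h 0 t := by
    intro t
    have hc : HasDerivAt (fun t : ℝ => y + t • v) v t := by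
      simpa using ((hasDerivAt_id t).smul_const v).const_add y
    have hmem : 0 < (y + t • v) l := by rw [hcl t]; exact hy
    have hfd := (hdiff _ hmem).hasFDerivAt.comp_hasDerivAt t hc
    have hz : fderiv ℝ f (y + t • v) v = 0 := hderiv0 _ hmem v hvl
    rw [hz] at hfd
    exact hfd
  have hconst : h 0 = h 1 :=
    is_const_of_deriv_eq_zero (fun t => (hd0 t).differentiableAt) (fun t => (hd0 t).deriv) 0 1
  have h0 : h 0 = f y := by simp [hh]
  have h1 : h 1 = f ((y l) • EuclideanSpace.single l 1) := by
    rw [hh]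
    congr 1
    rw [hv]; simp
  rw [← h0, hconst, h1]
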